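/- There is an absolute constant C such that for all real x ≥ 2, |Σ_{P monic irreducible, |P| ≤ x} (log |P|)/|P| − log x| ≤ C·(1 + log q), where |P| = q^{deg P}. In other words, Σ_{|P| ≤ x} (log|P|)/|P| = log x + O(1). -/

import Mathlib

open Polynomial UniqueFactorizationMonoid Finset

lemma mertens_aux_dvd {q : ℕ} (hq : 2 ≤ q) {d : ℕ} (hd : d ≠ 0) :
    ∀ n : ℕ, (q ^ d - 1 ∣ q ^ n - 1) → d ∣ n := by
  intro n
  induction n using Nat.strong_induction_on with
  | _ n ih =>
    intro h
    rcases lt_or_ge n d with hlt | hge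
    · have h1 : q ^ n < q ^ d := Nat.pow_lt_pow_right (by omega) hlt
      have h2 : 1 ≤ q ^ n := Nat.one_le_pow _ _ (by omega)
      have h3 : q ^ n - 1 = 0 := Nat.eq_zero_of_dvd_of_lt h (by omega)
      have h5 : n = 0 := by
        by_contra h5
        have := Nat.one_lt_pow h5 (show 1 < q by omega)
        omega
      simp [h5]
    · have hmul : q ^ (n - d) * (q ^ d - 1) = q ^ n - q ^ (n - d) := by
        rw [Nat.mul_sub, Nat.mul_one, ← pow_add, Nat.sub_add_cancel hge]
      have h2 : q ^ d - 1 ∣ q ^ n - q ^ (n - d) := hmul ▸ Dvd.intro_left _ rfl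
      have h3 : q ^ (n - d) ≤ q ^ n := Nat.pow_le_pow_right (by omega) (by omega)
      have h4 : 1 ≤ q ^ (n - d) := Nat.one_le_pow _ _ (by omega)
      have h5 : q ^ d - 1 ∣ q ^ (n - d) - 1 := by
        have h6 := Nat.dvd_sub h h2
        have e : q ^ n - 1 - (q ^ n - q ^ (n - d)) = q ^ (n - d) - 1 := by omega
        rwa [e] at h6
      have h7 := ih (n - d) (by omega) h5
      have h8 : d ∣ (n - d) + d := h7.add (dvd_refl d)
      rwa [Nat.sub_add_cancel hge] at h8

lemma mertens_geom_nat {q : ℕ} (hq : 2 ≤ q) : ∀ m : ℕ, ∑ d ∈ Icc 1 m, q ^ d ≤ 2 * q ^ m := by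
  intro m
  induction m with
  | zero => simp
  | succ m ih =>
    rw [Finset.sum_Icc_succ_top (by omega)]
    have h1 : 2 * q ^ m ≤ q * q ^ m := Nat.mul_le_mul_right _ (by omega)
    have h2 : q * q ^ m = q ^ (m + 1) := by rw [pow_succ, mul_comm]
    omega

section Core


variable {F : Type} [Field F] [Fintype F]

lemma mertens_g_ne_zero {n : ℕ} (hn : n ≠ 0) :
    (X ^ (Fintype.card F) ^ n - X : Polynomial F) ≠ 0 :=
  FiniteField.X_pow_card_pow_sub_X_ne_zero F hn Fintype.one_lt_card

lemma mertens_g_monic {n : ℕ} (hn : n ≠ 0) :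
    (X ^ (Fintype.card F) ^ n - X : Polynomial F).Monic := by
  apply monic_X_pow_sub
  rw [degree_X]
  have : 1 < Fintype.card F ^ n := Nat.one_lt_pow hn Fintype.one_lt_card
  exact_mod_cast this

lemma mertens_g_squarefree {n : ℕ} (hn : n ≠ 0) :
    Squarefree (X ^ (Fintype.card F) ^ n - X : Polynomial F) := by
  haveI : CharP F (ringChar F) := ringChar.charP F
  apply Separable.squarefree
  apply galois_poly_separable (ringChar F)
  obtain ⟨m, -, hcard⟩ := FiniteField.card F (ringChar F)
  have h1 : ringChar F ∣ Fintype.card F := hcard ▸ dvd_pow_self _ m.pos.ne'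
  exact h1.trans (dvd_pow_self _ hn)

lemma mertens_dvd_g {P : Polynomial F} (hm : P.Monic) (hi : Irreducible P) {n : ℕ}
    (hd : P.natDegree ∣ n) : P ∣ X ^ (Fintype.card F) ^ n - X := by
  haveI hfact : Fact (Irreducible P) := ⟨hi⟩
  have hP0 : P ≠ 0 := hi.ne_zero
  haveI hfin : Module.Finite F (AdjoinRoot P) := (AdjoinRoot.powerBasis hP0).finite
  haveI : Finite (AdjoinRoot P) := Module.finite_of_finite F
  haveI hFT : Fintype (AdjoinRoot P) := Fintype.ofFinite _
  have hcard : Fintype.card (AdjoinRoot P) = Fintype.card F ^ P.natDegree := by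
    rw [Module.card_eq_pow_finrank (K := F) (V := AdjoinRoot P), (AdjoinRoot.powerBasis hP0).finrank,
      AdjoinRoot.powerBasis_dim]
  obtain ⟨k, rfl⟩ := hd
  have ha : (AdjoinRoot.root P) ^ (Fintype.card F) ^ (P.natDegree * k) = AdjoinRoot.root P := by
    rw [pow_mul, ← hcard]
    exact FiniteField.pow_card_pow k _
  have h0 : (aeval (AdjoinRoot.root P)) (X ^ (Fintype.card F) ^ (P.natDegree * k) - X
      : Polynomial F) = 0 := by
    rw [map_sub, map_pow, aeval_X, ha, sub_self]
  have hdvd := minpoly.dvd F (AdjoinRoot.root P) h0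
  rwa [AdjoinRoot.minpoly_root hP0, hm.leadingCoeff, inv_one, map_one, mul_one] at hdvd

lemma mertens_deg_dvd {P : Polynomial F} (hm : P.Monic) (hi : Irreducible P) {n : ℕ}
    (hn : n ≠ 0) (hdvd : P ∣ X ^ (Fintype.card F) ^ n - X) : P.natDegree ∣ n := by
  haveI hfact : Fact (Irreducible P) := ⟨hi⟩
  have hP0 : P ≠ 0 := hi.ne_zero
  have hq1 : 1 < Fintype.card F := Fintype.one_lt_card
  haveI hfin : Module.Finite F (AdjoinRoot P) := (AdjoinRoot.powerBasis hP0).finite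
  haveI : Finite (AdjoinRoot P) := Module.finite_of_finite F
  haveI hFT : Fintype (AdjoinRoot P) := Fintype.ofFinite _
  have hcard : Fintype.card (AdjoinRoot P) = Fintype.card F ^ P.natDegree := by
    rw [Module.card_eq_pow_finrank (K := F) (V := AdjoinRoot P), (AdjoinRoot.powerBasis hP0).finrank,
      AdjoinRoot.powerBasis_dim]
  haveI hcharF : CharP F (ringChar F) := ringChar.charP F
  have hpprime : (ringChar F).Prime := CharP.char_is_prime F _
  obtain ⟨m, -, hcardF⟩ := FiniteField.card F (ringChar F)
  haveI hcharK : CharP (AdjoinRoot P) (ringChar F) :=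
    (Algebra.charP_iff F (AdjoinRoot P) _).mp hcharF
  haveI : ExpChar (AdjoinRoot P) (ringChar F) := ExpChar.prime hpprime
  have hqn : Fintype.card F ^ n = ringChar F ^ ((m : ℕ) * n) := by rw [hcardF, ← pow_mul]
  have hroot : (AdjoinRoot.root P) ^ Fintype.card F ^ n = AdjoinRoot.root P := by
    obtain ⟨c, hc⟩ := hdvd
    have h0 : (AdjoinRoot.mk P) (X ^ Fintype.card F ^ n - X : Polynomial F) = 0 := by
      rw [hc, map_mul, AdjoinRoot.mk_self, zero_mul]
    rw [map_sub, map_pow, AdjoinRoot.mk_X, sub_eq_zero] at h0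
    exact h0
  have hall : ∀ y : AdjoinRoot P, y ^ Fintype.card F ^ n = y := by
    have hcomp : (iterateFrobenius (AdjoinRoot P) (ringChar F) ((m : ℕ) * n)).comp
        (AdjoinRoot.mk P) = (AdjoinRoot.mk P : Polynomial F →+* AdjoinRoot P) := by
      apply Polynomial.ringHom_ext
      · intro a
        simp only [RingHom.comp_apply, AdjoinRoot.mk_C, iterateFrobenius_def]
        rw [← map_pow, ← hqn, FiniteField.pow_card_pow]
      · simp only [RingHom.comp_apply, AdjoinRoot.mk_X, iterateFrobenius_def]
        rw [← hqn, hroot]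
    intro y
    obtain ⟨f, rfl⟩ := AdjoinRoot.mk_surjective y
    have h1 : (iterateFrobenius (AdjoinRoot P) (ringChar F) ((m : ℕ) * n))
        ((AdjoinRoot.mk P) f) = (AdjoinRoot.mk P) f := by
      rw [← RingHom.comp_apply, hcomp]
    rwa [iterateFrobenius_def, ← hqn] at h1
  obtain ⟨g, hg⟩ := IsCyclic.exists_generator (α := (AdjoinRoot P)ˣ)
  have horder : orderOf g = Fintype.card F ^ P.natDegree - 1 := by
    rw [orderOf_eq_card_of_forall_mem_zpowers hg, Nat.card_eq_fintype_card,
      Fintype.card_units, hcard]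
  have hgpow : g ^ (Fintype.card F ^ n - 1) = 1 := by
    have h1 : (g : AdjoinRoot P) ^ Fintype.card F ^ n = g := hall g
    have h2 : g ^ Fintype.card F ^ n = g := Units.ext (by
      rw [Units.val_pow_eq_pow_val]; exact h1)
    have h3 : g ^ (Fintype.card F ^ n - 1) * g = 1 * g := by
      rw [← pow_succ, Nat.sub_add_cancel (Nat.one_le_pow _ _ (by omega)), h2, one_mul]
    exact mul_right_cancel h3
  have hdvd2 : Fintype.card F ^ P.natDegree - 1 ∣ Fintype.card F ^ n - 1 :=
    horder ▸ orderOf_dvd_of_pow_eq_one hgpow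
  exact mertens_aux_dvd (by omega) hi.natDegree_pos.ne' n hdvd2

end Core

noncomputable def mertensS (F : Type) [Field F] [Fintype F] (n : ℕ) : Finset (Polynomial F) :=
  letI := Classical.decEq F
  letI := Classical.decEq (Polynomial F)
  (normalizedFactors ((X : Polynomial F) ^ (Fintype.card F) ^ n - X)).toFinset

noncomputable def mertensPi (F : Type) [Field F] [Fintype F] (d : ℕ) : Finset (Polynomial F) :=
  (mertensS F d).filter (fun P => P.natDegree = d)

section Counting

variable {F : Type} [Field F] [Fintype F]

lemma natDegree_eq_of_mem_mertensPi {d : ℕ} {P : Polynomial F} (hP : P ∈ mertensPi F d) :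
    P.natDegree = d := (Finset.mem_filter.mp hP).2

lemma mem_mertensS {n : ℕ} (hn : n ≠ 0) {P : Polynomial F} :
    P ∈ mertensS F n ↔ P.Monic ∧ Irreducible P ∧ P.natDegree ∣ n := by
  letI := Classical.decEq F
  letI := Classical.decEq (Polynomial F)
  have hg0 := mertens_g_ne_zero (F := F) hn
  rw [mertensS, Multiset.mem_toFinset]
  constructor
  · intro hP
    have hirr : Irreducible P := irreducible_of_normalized_factor P hP
    have hnorm : normalize P = P := normalize_normalized_factor P hP
    have hmon : P.Monic := by rw [← hnorm]; exact monic_normalize hirr.ne_zero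
    exact ⟨hmon, hirr, mertens_deg_dvd hmon hirr hn (dvd_of_mem_normalizedFactors hP)⟩
  · rintro ⟨hm, hi, hd⟩
    have hdvd := mertens_dvd_g hm hi hd
    obtain ⟨Q, hQ, hassoc⟩ := exists_mem_normalizedFactors_of_dvd hg0 hi hdvd
    have hQmon : Q.Monic := by
      rw [← normalize_normalized_factor Q hQ]
      exact monic_normalize (irreducible_of_normalized_factor Q hQ).ne_zero
    have hPQ : P = Q := eq_of_monic_of_associated hm hQmon hassoc
    exact hPQ ▸ hQ

lemma mem_mertensPi {d : ℕ} (hd : d ≠ 0) {P : Polynomial F} :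
    P ∈ mertensPi F d ↔ P.Monic ∧ Irreducible P ∧ P.natDegree = d := by
  rw [mertensPi, Finset.mem_filter, mem_mertensS hd]
  constructor
  · rintro ⟨⟨hm, hi, -⟩, hdeg⟩
    exact ⟨hm, hi, hdeg⟩
  · rintro ⟨hm, hi, hdeg⟩
    exact ⟨⟨hm, hi, hdeg ▸ dvd_refl d⟩, hdeg⟩

lemma mertensS_sum_natDegree {n : ℕ} (hn : n ≠ 0) :
    ∑ P ∈ mertensS F n, P.natDegree = (Fintype.card F) ^ n := by
  letI := Classical.decEq F
  letI := Classical.decEq (Polynomial F)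
  have hg0 := mertens_g_ne_zero (F := F) hn
  have hnodup : (normalizedFactors ((X : Polynomial F) ^ (Fintype.card F) ^ n - X)).Nodup :=
    (squarefree_iff_nodup_normalizedFactors hg0).mp (mertens_g_squarefree hn)
  have hmonics : ∀ Q ∈ normalizedFactors ((X : Polynomial F) ^ (Fintype.card F) ^ n - X),
      Q.Monic := by
    intro Q hQ
    rw [← normalize_normalized_factor Q hQ]
    exact monic_normalize (irreducible_of_normalized_factor Q hQ).ne_zero
  have hmp : (normalizedFactors ((X : Polynomial F) ^ (Fintype.card F) ^ n - X)).prod.Monic := by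
    have := monic_multiset_prod_of_monic
      (normalizedFactors ((X : Polynomial F) ^ (Fintype.card F) ^ n - X)) id
      (fun i hi => hmonics i hi)
    rwa [Multiset.map_id] at this
  have hprod : (normalizedFactors ((X : Polynomial F) ^ (Fintype.card F) ^ n - X)).prod
      = (X : Polynomial F) ^ (Fintype.card F) ^ n - X :=
    eq_of_monic_of_associated hmp (mertens_g_monic hn) (prod_normalizedFactors hg0)
  have h0 : (0 : Polynomial F) ∉
      normalizedFactors ((X : Polynomial F) ^ (Fintype.card F) ^ n - X) :=
    zero_notMem_normalizedFactors _
  rw [mertensS, ← Multiset.toFinset_eq hnodup, Finset.sum_mk,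
    ← Polynomial.natDegree_multiset_prod _ h0, hprod]
  exact FiniteField.X_pow_card_pow_sub_X_natDegree_eq F hn Fintype.one_lt_card

lemma mertensPi_upper {d : ℕ} (hd : d ≠ 0) :
    d * (mertensPi F d).card ≤ (Fintype.card F) ^ d := by
  have hsub : mertensPi F d ⊆ mertensS F d := Finset.filter_subset _ _
  calc d * (mertensPi F d).card = ∑ _P ∈ mertensPi F d, d := by
        rw [sum_const, smul_eq_mul, mul_comm]
    _ = ∑ P ∈ mertensPi F d, P.natDegree := by
        exact sum_congr rfl fun P hP => (natDegree_eq_of_mem_mertensPi hP).symm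
    _ ≤ ∑ P ∈ mertensS F d, P.natDegree := sum_le_sum_of_subset hsub
    _ = (Fintype.card F) ^ d := mertensS_sum_natDegree hd

lemma mertensPi_lower {n : ℕ} (hn : n ≠ 0) :
    (Fintype.card F) ^ n ≤ n * (mertensPi F n).card + 2 * (Fintype.card F) ^ (n / 2) := by
  classical
  have hq : 2 ≤ Fintype.card F := Fintype.one_lt_card
  set T := (mertensS F n).filter (fun P => ¬ P.natDegree = n) with hT
  have hsplit : ∑ P ∈ mertensS F n, P.natDegree
      = ∑ P ∈ mertensPi F n, P.natDegree + ∑ P ∈ T, P.natDegree := by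
    rw [mertensPi, hT]
    exact (sum_filter_add_sum_filter_not _ _ _).symm
  have h1 : ∑ P ∈ mertensPi F n, P.natDegree = n * (mertensPi F n).card := by
    rw [sum_congr rfl (fun P hP => natDegree_eq_of_mem_mertensPi (F := F) hP), sum_const,
      smul_eq_mul, mul_comm]
  have hmaps : ∀ P ∈ T, P.natDegree ∈ Icc 1 (n / 2) := by
    intro P hP
    obtain ⟨hPS, hne⟩ := Finset.mem_filter.mp hP
    obtain ⟨hm, hi, hdvd⟩ := (mem_mertensS hn).mp hPS
    have h1d : 1 ≤ P.natDegree := hi.natDegree_pos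
    obtain ⟨k, hk⟩ := hdvd
    have hk2 : 2 ≤ k := by
      by_contra hcon
      push_neg at hcon
      interval_cases k <;> omega
    have h2d : P.natDegree * 2 ≤ n := hk ▸ Nat.mul_le_mul_left _ hk2
    exact Finset.mem_Icc.mpr ⟨h1d, by omega⟩
  have hfib := Finset.sum_fiberwise_of_maps_to hmaps (fun P => P.natDegree)
  have h2 : ∑ P ∈ T, P.natDegree ≤ ∑ d ∈ Icc 1 (n / 2), (Fintype.card F) ^ d := by
    rw [← hfib]
    apply sum_le_sum
    intro d hd
    have hd0 : d ≠ 0 := by have := (Finset.mem_Icc.mp hd).1; omega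
    have hsub2 : T.filter (fun P => P.natDegree = d) ⊆ mertensPi F d := by
      intro P hP
      obtain ⟨hPT, hdeg⟩ := Finset.mem_filter.mp hP
      obtain ⟨hPS, -⟩ := Finset.mem_filter.mp hPT
      obtain ⟨hm, hi, -⟩ := (mem_mertensS hn).mp hPS
      exact (mem_mertensPi hd0).mpr ⟨hm, hi, hdeg⟩
    calc ∑ P ∈ T.filter (fun P => P.natDegree = d), P.natDegree
        = ∑ _P ∈ T.filter (fun P => P.natDegree = d), d :=
          sum_congr rfl fun P hP => (Finset.mem_filter.mp hP).2
      _ = d * (T.filter (fun P => P.natDegree = d)).card := by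
          rw [sum_const, smul_eq_mul, mul_comm]
      _ ≤ d * (mertensPi F d).card := Nat.mul_le_mul_left _ (Finset.card_le_card hsub2)
      _ ≤ (Fintype.card F) ^ d := mertensPi_upper hd0
  have h3 := mertens_geom_nat hq (n / 2)
  have h4 := mertensS_sum_natDegree (F := F) hn
  omega

end Counting

theorem mertensFirst_functionField :
    ∃ C : ℝ, 0 < C ∧ ∀ (F : Type) [Field F] [Fintype F] (x : ℝ), 2 ≤ x →
      |(∑' P : {P : Polynomial F // P.Monic ∧ Irreducible P ∧
            (Fintype.card F : ℝ) ^ P.natDegree ≤ x},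
          Real.log ((Fintype.card F : ℝ) ^ P.1.natDegree)
            / (Fintype.card F : ℝ) ^ P.1.natDegree) - Real.log x|
        ≤ C * (1 + Real.log (Fintype.card F)) := by
  classical
  refine ⟨9, by norm_num, ?_⟩
  intro F _ _ x hx
  have hq : 2 ≤ Fintype.card F := Fintype.one_lt_card
  have hq1R : (1 : ℝ) < (Fintype.card F : ℝ) := by exact_mod_cast hq
  have hq0R : (0 : ℝ) < (Fintype.card F : ℝ) := by linarith
  have hlogq : 0 < Real.log (Fintype.card F) := Real.log_pos hq1R
  have hx0 : (0 : ℝ) < x := by linarith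
  set q : ℕ := Fintype.card F with hqdef
  set N : ℕ := ⌊Real.logb q x⌋₊ with hNdef
  have hmem : ∀ P : Polynomial F,
      (P.Monic ∧ Irreducible P ∧ (q : ℝ) ^ P.natDegree ≤ x)
        ↔ P ∈ (Icc 1 N).biUnion (mertensPi F) := by
    intro P
    constructor
    · rintro ⟨hm, hi, hle⟩
      have h1 : 1 ≤ P.natDegree := hi.natDegree_pos
      have h2 : (P.natDegree : ℝ) * Real.log q ≤ Real.log x := by
        rw [← Real.log_pow]
        exact Real.log_le_log (by positivity) hle
      have h3 : (P.natDegree : ℝ) ≤ Real.logb q x := by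
        rw [← Real.log_div_log, le_div_iff₀ hlogq]
        exact h2
      have h4 : P.natDegree ≤ N := Nat.le_floor h3
      exact Finset.mem_biUnion.mpr ⟨P.natDegree, Finset.mem_Icc.mpr ⟨h1, h4⟩,
        (mem_mertensPi (by omega)).mpr ⟨hm, hi, rfl⟩⟩
    · intro hP
      obtain ⟨d, hd, hPd⟩ := Finset.mem_biUnion.mp hP
      obtain ⟨h1, h4⟩ := Finset.mem_Icc.mp hd
      obtain ⟨hm, hi, hdeg⟩ := (mem_mertensPi (by omega)).mp hPd
      refine ⟨hm, hi, ?_⟩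
      rw [hdeg]
      have h5 : (N : ℝ) ≤ Real.logb q x :=
        Nat.floor_le (Real.logb_nonneg hq1R (by linarith))
      calc ((q : ℕ) : ℝ) ^ d ≤ (q : ℝ) ^ N := pow_le_pow_right₀ hq1R.le h4
        _ = (q : ℝ) ^ (N : ℝ) := (Real.rpow_natCast _ _).symm
        _ ≤ (q : ℝ) ^ Real.logb q x := Real.rpow_le_rpow_of_exponent_le hq1R.le h5
        _ = x := Real.rpow_logb hq0R (by linarith) hx0
  have htsum : (∑' P : {P : Polynomial F // P.Monic ∧ Irreducible P ∧
        (q : ℝ) ^ P.natDegree ≤ x},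
        Real.log ((q : ℝ) ^ P.1.natDegree) / (q : ℝ) ^ P.1.natDegree)
      = ∑ P ∈ (Icc 1 N).biUnion (mertensPi F),
          Real.log ((q : ℝ) ^ P.natDegree) / (q : ℝ) ^ P.natDegree := by
    rw [← Finset.tsum_subtype ((Icc 1 N).biUnion (mertensPi F))
      (fun P => Real.log ((q : ℝ) ^ P.natDegree) / (q : ℝ) ^ P.natDegree)]
    exact (Equiv.subtypeEquivRight hmem).tsum_eq
      (fun P => Real.log ((q : ℝ) ^ P.1.natDegree) / (q : ℝ) ^ P.1.natDegree)
  have hdisj : (↑(Icc 1 N) : Set ℕ).PairwiseDisjoint (mertensPi F) := by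
    intro a _ b _ hab
    refine Finset.disjoint_left.mpr fun {P} hPa hPb => ?_
    have h1 := natDegree_eq_of_mem_mertensPi hPa
    have h2 := natDegree_eq_of_mem_mertensPi hPb
    exact hab (h1 ▸ h2 ▸ rfl)
  have hsum2 : ∑ P ∈ (Icc 1 N).biUnion (mertensPi F),
      Real.log ((q : ℝ) ^ P.natDegree) / (q : ℝ) ^ P.natDegree
      = ∑ n ∈ Icc 1 N, ((mertensPi F n).card : ℝ) * ((n : ℝ) * Real.log q / (q : ℝ) ^ n) := by
    rw [Finset.sum_biUnion hdisj]
    refine sum_congr rfl fun n _ => ?_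
    calc ∑ P ∈ mertensPi F n, Real.log ((q : ℝ) ^ P.natDegree) / (q : ℝ) ^ P.natDegree
        = ∑ _P ∈ mertensPi F n, (n : ℝ) * Real.log q / (q : ℝ) ^ n := by
          refine sum_congr rfl fun P hP => ?_
          rw [natDegree_eq_of_mem_mertensPi hP, Real.log_pow]
      _ = ((mertensPi F n).card : ℝ) * ((n : ℝ) * Real.log q / (q : ℝ) ^ n) := by
          rw [sum_const, nsmul_eq_mul]
  rw [htsum, hsum2]
  -- the ratio `r = 1/√2`
  set r : ℝ := (Real.sqrt 2)⁻¹ with hrdef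
  have hs2 : (1 : ℝ) < Real.sqrt 2 := by
    have h2 : Real.sqrt 1 < Real.sqrt 2 := Real.sqrt_lt_sqrt (by norm_num) (by norm_num)
    rwa [Real.sqrt_one] at h2
  have hr0 : 0 < r := inv_pos.mpr (by linarith)
  have hr1 : r < 1 := by rw [hrdef]; exact inv_lt_one_of_one_lt₀ hs2
  have hrsq : r ^ 2 = 1 / 2 := by
    rw [hrdef, inv_pow, Real.sq_sqrt (by norm_num : (0:ℝ) ≤ 2), one_div]
  have hr34 : r ≤ 3 / 4 := by
    have h43 : (4 : ℝ) / 3 ≤ Real.sqrt 2 :=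
      (Real.le_sqrt (by norm_num) (by norm_num)).mpr (by norm_num)
    have := inv_anti₀ (by norm_num : (0:ℝ) < 4/3) h43
    rw [hrdef]
    refine this.trans ?_
    norm_num
  -- upper bound on each term
  have hterm_ub : ∀ n ∈ Icc 1 N,
      ((mertensPi F n).card : ℝ) * ((n : ℝ) * Real.log q / (q : ℝ) ^ n) ≤ Real.log q := by
    intro n hn
    have hn0 : n ≠ 0 := by have := (Finset.mem_Icc.mp hn).1; omega
    have hub := mertensPi_upper (F := F) hn0
    have hubR : (n : ℝ) * ((mertensPi F n).card : ℝ) ≤ (q : ℝ) ^ n := by exact_mod_cast hub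
    have hqn0 : (0:ℝ) < (q : ℝ) ^ n := by positivity
    calc ((mertensPi F n).card : ℝ) * ((n : ℝ) * Real.log q / (q : ℝ) ^ n)
        = ((n : ℝ) * ((mertensPi F n).card : ℝ) / (q : ℝ) ^ n) * Real.log q := by ring
      _ ≤ 1 * Real.log q := by
          apply mul_le_mul_of_nonneg_right _ hlogq.le
          rw [div_le_one hqn0]
          exact hubR
      _ = Real.log q := one_mul _
  -- lower bound on each term
  have hterm_lb : ∀ n ∈ Icc 1 N,
      Real.log q - ((mertensPi F n).card : ℝ) * ((n : ℝ) * Real.log q / (q : ℝ) ^ n)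
        ≤ 2 * Real.log q * r ^ n := by
    intro n hn
    have hn0 : n ≠ 0 := by have := (Finset.mem_Icc.mp hn).1; omega
    have hlb := mertensPi_lower (F := F) hn0
    have hlbR : ((q : ℝ) ^ n : ℝ)
        ≤ (n : ℝ) * ((mertensPi F n).card : ℝ) + 2 * (q : ℝ) ^ (n / 2) := by
      exact_mod_cast hlb
    have hqn0 : (0:ℝ) < (q : ℝ) ^ n := by positivity
    have hratio : (q : ℝ) ^ (n / 2) / (q : ℝ) ^ n ≤ r ^ n := by
      have hsplit : (q : ℝ) ^ n = (q : ℝ) ^ (n / 2) * (q : ℝ) ^ (n - n / 2) := by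
        rw [← pow_add]
        congr 1
        omega
      have h1 : (q : ℝ) ^ (n / 2) / (q : ℝ) ^ n = ((q : ℝ) ^ (n - n / 2))⁻¹ := by
        rw [hsplit]
        rw [div_mul_eq_div_div, div_self (by positivity), one_div]
      have hq2 : (2:ℝ) ^ (n - n / 2) ≤ (q : ℝ) ^ (n - n / 2) :=
        pow_le_pow_left₀ (by norm_num) (by exact_mod_cast hq) _
      have h2 : ((q : ℝ) ^ (n - n / 2))⁻¹ ≤ ((2 : ℝ) ^ (n - n / 2))⁻¹ :=
        inv_anti₀ (by positivity) hq2
      have h3 : ((2:ℝ) ^ (n - n/2))⁻¹ = r ^ (2 * (n - n / 2)) := by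
        rw [pow_mul, hrsq, one_div, inv_pow]
      rw [h1]
      refine h2.trans ?_
      rw [h3]
      exact pow_le_pow_of_le_one hr0.le hr1.le (by omega)
    calc Real.log q - ((mertensPi F n).card : ℝ) * ((n : ℝ) * Real.log q / (q : ℝ) ^ n)
        = ((q : ℝ) ^ n - (n : ℝ) * ((mertensPi F n).card : ℝ)) * Real.log q / (q : ℝ) ^ n := by
          field_simp
      _ ≤ (2 * (q : ℝ) ^ (n / 2)) * Real.log q / (q : ℝ) ^ n := by
          gcongr
          linarith
      _ = 2 * Real.log q * ((q : ℝ) ^ (n / 2) / (q : ℝ) ^ n) := by ring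
      _ ≤ 2 * Real.log q * r ^ n := by
          apply mul_le_mul_of_nonneg_left hratio (by positivity)
  -- geometric sum bound
  have hgeom : ∑ n ∈ Icc 1 N, r ^ n ≤ 4 := by
    have hsub : Icc 1 N ⊆ range (N + 1) := by
      intro n hn
      have := (Finset.mem_Icc.mp hn).2
      exact Finset.mem_range.mpr (by omega)
    have h1 : ∑ n ∈ Icc 1 N, r ^ n ≤ ∑ n ∈ range (N + 1), r ^ n :=
      sum_le_sum_of_subset_of_nonneg hsub (fun i _ _ => by positivity)
    refine h1.trans ?_
    rw [geom_sum_eq (ne_of_lt hr1)]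
    rw [div_le_iff_of_neg (by linarith : r - 1 < 0)]
    have hp1 : 0 ≤ r ^ (N + 1) := by positivity
    nlinarith
  -- assembling
  have hcard_Icc : (Icc 1 N).card = N := by rw [Nat.card_Icc]; omega
  have hT_ub : ∑ n ∈ Icc 1 N, ((mertensPi F n).card : ℝ) * ((n : ℝ) * Real.log q / (q : ℝ) ^ n)
      ≤ (N : ℝ) * Real.log q := by
    calc ∑ n ∈ Icc 1 N, ((mertensPi F n).card : ℝ) * ((n : ℝ) * Real.log q / (q : ℝ) ^ n)
        ≤ ∑ _n ∈ Icc 1 N, Real.log q := sum_le_sum hterm_ub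
      _ = (N : ℝ) * Real.log q := by rw [sum_const, hcard_Icc, nsmul_eq_mul]
  have hT_lb : (N : ℝ) * Real.log q
      - ∑ n ∈ Icc 1 N, ((mertensPi F n).card : ℝ) * ((n : ℝ) * Real.log q / (q : ℝ) ^ n)
      ≤ 8 * Real.log q := by
    have h1 : (N : ℝ) * Real.log q
        - ∑ n ∈ Icc 1 N, ((mertensPi F n).card : ℝ) * ((n : ℝ) * Real.log q / (q : ℝ) ^ n)
        = ∑ n ∈ Icc 1 N, (Real.log q
            - ((mertensPi F n).card : ℝ) * ((n : ℝ) * Real.log q / (q : ℝ) ^ n)) := by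
      rw [Finset.sum_sub_distrib, sum_const, hcard_Icc, nsmul_eq_mul]
    rw [h1]
    calc ∑ n ∈ Icc 1 N, (Real.log q
            - ((mertensPi F n).card : ℝ) * ((n : ℝ) * Real.log q / (q : ℝ) ^ n))
        ≤ ∑ n ∈ Icc 1 N, 2 * Real.log q * r ^ n := sum_le_sum hterm_lb
      _ = 2 * Real.log q * ∑ n ∈ Icc 1 N, r ^ n := by rw [mul_sum]
      _ ≤ 2 * Real.log q * 4 := by
          apply mul_le_mul_of_nonneg_left hgeom (by positivity)
      _ = 8 * Real.log q := by ring
  have hlogx1 : (N : ℝ) * Real.log q ≤ Real.log x := by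
    have h5 : (N : ℝ) ≤ Real.logb q x :=
      Nat.floor_le (Real.logb_nonneg hq1R (by linarith))
    calc (N : ℝ) * Real.log q ≤ Real.logb q x * Real.log q :=
        mul_le_mul_of_nonneg_right h5 hlogq.le
      _ = Real.log x := by rw [← Real.log_div_log, div_mul_cancel₀ _ (ne_of_gt hlogq)]
  have hlog_eq : Real.logb (q : ℝ) x * Real.log q = Real.log x := by
    rw [← Real.log_div_log, div_mul_cancel₀ _ (ne_of_gt hlogq)]
  have hlogx2 : Real.log x ≤ ((N : ℝ) + 1) * Real.log q := by
    have h5 : Real.logb (q : ℝ) x ≤ (N : ℝ) + 1 := (Nat.lt_floor_add_one _).le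
    have h6 : Real.logb (q : ℝ) x * Real.log q ≤ ((N : ℝ) + 1) * Real.log q :=
      mul_le_mul_of_nonneg_right h5 hlogq.le
    linarith [hlog_eq]
  rw [abs_le]
  refine ⟨by linarith, by linarith⟩
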